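/- The total number of k-Dyck paths with N down-steps equals the sum over all compositions: ∑_{a_1+⋯+a_k=N, a_i≥0} (1/N) C(N-1+a_1,a_1) ⋯ C(N-1+a_{k-1},a_{k-1}) C(N+a_k, a_k - 1) = (1/(kN+1)) C((k+1)N, N). -/

import Mathlib

open PowerSeries in
lemma vand (r s n : ℕ) :
    ∑ p ∈ Finset.HasAntidiagonal.antidiagonal n, ((Nat.choose (r + p.1) p.1 : ℚ) * Nat.choose (s + p.2) p.2)
      = Nat.choose (r + s + 1 + n) n := by
  have h : (invOneSubPow ℚ (r+1)).val * (invOneSubPow ℚ (s+1)).val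
      = (invOneSubPow ℚ ((r+s+1)+1)).val := by
    rw [← Units.val_mul, invOneSubPow_eq_inv_one_sub_pow, invOneSubPow_eq_inv_one_sub_pow,
      invOneSubPow_eq_inv_one_sub_pow, ← pow_add]
    ring_nf
  have h2 := congrArg (PowerSeries.coeff n) h
  rw [PowerSeries.coeff_mul] at h2
  simp only [invOneSubPow_val_succ_eq_mk_add_choose, PowerSeries.coeff_mk] at h2
  calc ∑ p ∈ Finset.HasAntidiagonal.antidiagonal n, ((Nat.choose (r + p.1) p.1 : ℚ) * Nat.choose (s + p.2) p.2)
      = ∑ p ∈ Finset.HasAntidiagonal.antidiagonal n, ((Nat.choose (r + p.1) r : ℚ) * Nat.choose (s + p.2) s) := by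
        refine Finset.sum_congr rfl fun p _ => ?_
        rw [add_comm r p.1, add_comm s p.2, Nat.choose_symm_add, Nat.choose_symm_add]
    _ = Nat.choose (r + s + 1 + n) n := by
        rw [h2]
        rw [Nat.choose_symm_add]

lemma sum_adt_snoc {M : Type*} [AddCommMonoid M] (m n : ℕ) (F : (Fin (m+1) → ℕ) → M) :
    ∑ a ∈ Finset.Nat.antidiagonalTuple (m+1) n, F a
      = ∑ p ∈ Finset.HasAntidiagonal.antidiagonal n, ∑ b ∈ Finset.Nat.antidiagonalTuple m p.1,
          F (Fin.snoc b p.2) := by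
  rw [Finset.sum_sigma']
  refine (Finset.sum_nbij' (i := fun x : Σ _ : ℕ × ℕ, Fin m → ℕ => (Fin.snoc x.2 x.1.2 : Fin (m+1) → ℕ))
    (j := fun a => ⟨(∑ i : Fin m, a i.castSucc, a (Fin.last m)), Fin.init a⟩)
    ?_ ?_ ?_ ?_ ?_).symm
  · rintro ⟨⟨x, y⟩, b⟩ hx
    simp only [Finset.mem_sigma, Finset.Nat.mem_antidiagonalTuple, Finset.HasAntidiagonal.mem_antidiagonal] at hx ⊢
    rw [Fin.sum_univ_castSucc]
    simp [Fin.snoc_castSucc, Fin.snoc_last, hx.2, hx.1]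
  · intro a ha
    simp only [Finset.mem_sigma, Finset.Nat.mem_antidiagonalTuple, Finset.HasAntidiagonal.mem_antidiagonal] at ha ⊢
    constructor
    · rw [← ha, Fin.sum_univ_castSucc]
    · rfl
  · rintro ⟨⟨x, y⟩, b⟩ hx
    simp only [Finset.mem_sigma, Finset.Nat.mem_antidiagonalTuple, Finset.HasAntidiagonal.mem_antidiagonal] at hx
    have h1 : ∀ i : Fin m, (Fin.snoc b y : Fin (m+1) → ℕ) i.castSucc = b i := fun i => Fin.snoc_castSucc ..
    ext <;> simp [Fin.init, h1, hx.1, hx.2]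
  · intro a ha
    simp [Fin.snoc_init_self]
  · rintro ⟨⟨x, y⟩, b⟩ hx
    rfl

lemma prod_filter_lt (m : ℕ) (g : ℕ → ℚ) (a : Fin (m+1) → ℕ) :
    ∏ i ∈ Finset.univ.filter (fun i : Fin (m+1) => (i:ℕ) < m), g (a i)
      = ∏ i : Fin m, g (a i.castSucc) := by
  refine (Finset.prod_bij (fun (i : Fin m) _ => (i.castSucc : Fin (m+1))) ?_ ?_ ?_ ?_).symm
  · intro i _; simp [i.isLt]
  · intro i _ j _ h
    exact Fin.castSucc_injective m h
  · intro b hb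
    simp only [Finset.mem_filter, Finset.mem_univ, true_and] at hb
    exact ⟨⟨(b : ℕ), hb⟩, Finset.mem_univ _, by ext; simp⟩
  · intro i _; rfl

lemma prodSum (c : ℕ) : ∀ m x : ℕ, 1 ≤ m →
    ∑ a ∈ Finset.Nat.antidiagonalTuple m x, ∏ i, (Nat.choose (c + a i) (a i) : ℚ)
      = Nat.choose (m * c + (m - 1) + x) x := by
  intro m
  induction m with
  | zero => omega
  | succ m ih =>
    intro x _
    rcases Nat.eq_zero_or_pos m with h | hm
    · subst h
      simp [Fin.prod_univ_one]
    · obtain ⟨m', rfl⟩ : ∃ m', m = m' + 1 := ⟨m - 1, by omega⟩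
      rw [sum_adt_snoc _ x (fun a => ∏ i, (Nat.choose (c + a i) (a i) : ℚ))]
      have key : ∀ p ∈ Finset.HasAntidiagonal.antidiagonal x,
          (∑ b ∈ Finset.Nat.antidiagonalTuple (m'+1) p.1,
            ∏ i : Fin (m'+2), (Nat.choose (c + (Fin.snoc b p.2 : Fin (m'+2) → ℕ) i)
              ((Fin.snoc b p.2 : Fin (m'+2) → ℕ) i) : ℚ))
          = (Nat.choose ((m'+1) * c + m' + p.1) p.1 : ℚ) * Nat.choose (c + p.2) p.2 := by
        intro p _
        have hb : ∀ b : Fin (m'+1) → ℕ,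
            ∏ i : Fin (m'+2), (Nat.choose (c + (Fin.snoc b p.2 : Fin (m'+2) → ℕ) i)
              ((Fin.snoc b p.2 : Fin (m'+2) → ℕ) i) : ℚ)
            = (∏ i : Fin (m'+1), (Nat.choose (c + b i) (b i) : ℚ)) * Nat.choose (c + p.2) p.2 := by
          intro b
          rw [Fin.prod_univ_castSucc]
          simp
        rw [Finset.sum_congr rfl fun b _ => hb b, ← Finset.sum_mul, ih p.1 hm]
        norm_num
      rw [Finset.sum_congr rfl key, vand ((m'+1) * c + m') c x]
      norm_num
      congr 1
      ring

lemma vand2 (r s n' : ℕ) :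
    ∑ p ∈ Finset.HasAntidiagonal.antidiagonal (n'+1), (Nat.choose (r+p.1) p.1 : ℚ) *
      (if p.2 = 0 then 0 else (Nat.choose (s + p.2) (p.2 - 1) : ℚ))
    = Nat.choose (r + (s+1) + 1 + n') n' := by
  rw [Finset.Nat.antidiagonal_succ', Finset.sum_cons, Finset.sum_map]
  rw [if_pos rfl, mul_zero, zero_add, ← vand r (s+1) n']
  refine Finset.sum_congr rfl fun p _ => ?_
  simp [Function.Embedding.prodMap, Nat.succ_eq_add_one,
    show s + (p.2 + 1) = s + 1 + p.2 from by omega, show s + (p.2+1) - 1 = s + p.2 from by omega]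

lemma final (k N : ℕ) (hk : 1 ≤ k) (hN : 1 ≤ N) :
    (1 / N : ℚ) * Nat.choose ((k+1)*N) (N-1) = (1 / (k*N+1) : ℚ) * Nat.choose ((k+1)*N) N := by
  have h := Nat.choose_succ_right_eq ((k+1)*N) (N-1)
  have h1 : N - 1 + 1 = N := by omega
  have h2 : (k+1)*N - (N-1) = k*N + 1 := by
    have : (k+1)*N = k*N + N := by ring
    omega
  rw [h1, h2] at h
  have hq := congrArg (fun t : ℕ => (t : ℚ)) h
  push_cast at hq
  have hN' : (N:ℚ) ≠ 0 := Nat.cast_ne_zero.mpr (by omega)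
  have hkN : ((k:ℚ)*N+1) ≠ 0 := by positivity
  field_simp
  linarith [hq]

/-- The total number of `k`-Dyck paths with `N` down-steps equals the sum of the refined
counts over all compositions `a₁+⋯+a_k = N`:
`∑ (1/N) C(N-1+a₁,a₁) ⋯ C(N-1+a_{k-1},a_{k-1}) C(N+a_k, a_k-1) = (1/(kN+1)) C((k+1)N, N)`,
with the convention `C(m,-1) = 0`. -/
theorem kDyck_total (k N : ℕ) (hk : 1 ≤ k) (hN : 1 ≤ N) :
    ∑ a ∈ Finset.Nat.antidiagonalTuple k N,
        (1 / N : ℚ) *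
          ((∏ i ∈ Finset.univ.filter (fun i : Fin k => (i : ℕ) < k - 1),
              (Nat.choose (N - 1 + a i) (a i) : ℚ)) *
            (if a ⟨k - 1, by omega⟩ = 0 then 0
             else (Nat.choose (N + a ⟨k - 1, by omega⟩) (a ⟨k - 1, by omega⟩ - 1) : ℚ)))
      = (1 / (k * N + 1) : ℚ) * Nat.choose ((k + 1) * N) N := by
  obtain ⟨m, rfl⟩ : ∃ m, k = m + 1 := ⟨k - 1, by omega⟩
  rcases Nat.eq_zero_or_pos m with rfl | hm
  · rw [Finset.Nat.antidiagonalTuple_one, Finset.sum_singleton]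
    have hfe : (Finset.univ.filter (fun i : Fin 1 => (i:ℕ) < 0 + 1 - 1)) = ∅ := by
      ext i; simp
    have hv : (![N] : Fin 1 → ℕ) ⟨0 + 1 - 1, by omega⟩ = N := rfl
    rw [hfe, Finset.prod_empty, hv, if_neg (by omega), one_mul]
    have hfin := final 1 N le_rfl hN
    have e1 : N + N = (1 + 1) * N := by ring
    rw [e1]
    convert hfin using 4
  · obtain ⟨N', rfl⟩ : ∃ N', N = N' + 1 := ⟨N - 1, by omega⟩
    obtain ⟨m', rfl⟩ : ∃ m'', m = m'' + 1 := ⟨m - 1, by omega⟩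
    simp only [Nat.add_sub_cancel]
    have hlast : (⟨m' + 1, by omega⟩ : Fin (m' + 1 + 1)) = Fin.last (m' + 1) := by
      ext; simp
    calc (∑ a ∈ Finset.Nat.antidiagonalTuple (m' + 1 + 1) (N' + 1),
          (1 / ((N' + 1 : ℕ) : ℚ)) *
            ((∏ i ∈ Finset.univ.filter (fun i : Fin (m' + 1 + 1) => (i : ℕ) < m' + 1),
                (Nat.choose (N' + a i) (a i) : ℚ)) *
              (if a ⟨m' + 1, by omega⟩ = 0 then 0
               else (Nat.choose (N' + 1 + a ⟨m' + 1, by omega⟩)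
                 (a ⟨m' + 1, by omega⟩ - 1) : ℚ))))
        = ∑ p ∈ Finset.HasAntidiagonal.antidiagonal (N' + 1), ∑ b ∈ Finset.Nat.antidiagonalTuple (m' + 1) p.1,
            (1 / ((N' + 1 : ℕ) : ℚ)) *
              ((∏ i : Fin (m' + 1), (Nat.choose (N' + b i) (b i) : ℚ)) *
                (if p.2 = 0 then 0
                 else (Nat.choose (N' + 1 + p.2) (p.2 - 1) : ℚ))) := by
          rw [sum_adt_snoc (m' + 1) (N' + 1)]
          refine Finset.sum_congr rfl fun p _ => Finset.sum_congr rfl fun b _ => ?_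
          rw [hlast, Fin.snoc_last,
            prod_filter_lt (m' + 1) (fun t => (Nat.choose (N' + t) t : ℚ)) (Fin.snoc b p.2)]
          simp only [Fin.snoc_castSucc]
      _ = (1 / ((N' + 1 : ℕ) : ℚ)) * ∑ p ∈ Finset.HasAntidiagonal.antidiagonal (N' + 1),
            (Nat.choose ((m' + 1) * N' + (m' + 1 - 1) + p.1) p.1 : ℚ) *
              (if p.2 = 0 then 0
               else (Nat.choose (N' + 1 + p.2) (p.2 - 1) : ℚ)) := by
          rw [Finset.mul_sum]
          refine Finset.sum_congr rfl fun p _ => ?_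
          rw [← Finset.mul_sum, ← Finset.sum_mul, prodSum N' (m' + 1) p.1 (by omega)]
      _ = (1 / ((N' + 1 : ℕ) : ℚ)) *
            Nat.choose ((m' + 1 + 1 + 1) * (N' + 1)) (N' + 1 - 1) := by
          have harg : (m' + 1) * N' + (m' + 1 - 1) + (N' + 1 + 1) + 1 + N'
              = (m' + 1 + 1 + 1) * (N' + 1) := by
            simp only [Nat.add_sub_cancel]; ring
          rw [vand2 ((m' + 1) * N' + (m' + 1 - 1)) (N' + 1) N', harg,
            Nat.add_sub_cancel]
      _ = (1 / ((m' + 1 + 1 : ℕ) * (N' + 1 : ℕ) + 1) : ℚ) *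
            Nat.choose ((m' + 1 + 1 + 1) * (N' + 1)) (N' + 1) :=
          final (m' + 1 + 1) (N' + 1) (by omega) (by omega)
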